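/- For the Schubert derivation coefficients σ̄_i (coefficients of the inverse Schubert derivation σ̄_+(z) = Σ_{j≥0}(−1)^j σ̄_j z^j), one has σ̄_i u = 0 for every u ∈ ⋀^s M with s ≤ i − 1, for all i ≥ 1. -/

import Mathlib

open ExteriorAlgebra

noncomputable section

abbrev M : Type := ℤ →₀ ℤ
def b (i : ℤ) : M := Finsupp.single i 1
abbrev A : Type := ExteriorAlgebra ℤ M

/-- Hasse–Schmidt derivation on `⋀M`, coefficientwise. -/
def IsHS (D : ℕ → Module.End ℤ A) : Prop :=
  ∀ (n : ℕ) (u w : A), D n (u * w) = ∑ j ∈ Finset.range (n + 1), D j u * D (n - j) w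

/-- `c` lists the coefficients of the Schubert derivation `σ₊(z)`:
`σ₊(z) bⱼ = ∑_{i≥0} b_{j+i} z^i`. -/
def IsSigmaPlus (c : ℕ → Module.End ℤ A) : Prop :=
  IsHS c ∧ c 0 = 1 ∧ ∀ (n : ℕ) (j : ℤ), c n (ι ℤ (b j)) = ι ℤ (b (j + n))

/-- `c` lists the coefficients (in `z^{-i}`) of `σ₋(z)`: `σ₋(z) bⱼ = ∑_{i≥0} b_{j-i} z^{-i}`. -/
def IsSigmaMinus (c : ℕ → Module.End ℤ A) : Prop :=
  IsHS c ∧ c 0 = 1 ∧ ∀ (n : ℕ) (j : ℤ), c n (ι ℤ (b j)) = ι ℤ (b (j - n))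

/-- `c` lists the coefficients of `σ̄₊(z)`, characterized by `σ̄₊(z) bⱼ = bⱼ − b_{j+1} z`. -/
def IsSigmaBarPlus (c : ℕ → Module.End ℤ A) : Prop :=
  IsHS c ∧ c 0 = 1 ∧ (∀ j : ℤ, c 1 (ι ℤ (b j)) = -(ι ℤ (b (j + 1)))) ∧
    ∀ n : ℕ, 2 ≤ n → ∀ j : ℤ, c n (ι ℤ (b j)) = 0

/-- `c` lists the coefficients (in `z^{-i}`) of `σ̄₋(z)`, characterized by
`σ̄₋(z) bⱼ = bⱼ − b_{j-1} z^{-1}`. -/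
def IsSigmaBarMinus (c : ℕ → Module.End ℤ A) : Prop :=
  IsHS c ∧ c 0 = 1 ∧ (∀ j : ℤ, c 1 (ι ℤ (b j)) = -(ι ℤ (b (j - 1)))) ∧
    ∀ n : ℕ, 2 ≤ n → ∀ j : ℤ, c n (ι ℤ (b j)) = 0

/-- For the inverse Schubert derivation `σ̄₊(z) = ∑_{j≥0} (−1)^j σ̄ⱼ z^j` (whose actual
coefficients are `c j = (−1)^j σ̄ⱼ`), one has `σ̄ᵢ u = 0` for every `u ∈ ⋀^s M` with
`s ≤ i − 1`, `i ≥ 1`.  (Note `σ̄ᵢ u = 0 ↔ c i u = 0`.) -/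
theorem stmt7 (c : ℕ → Module.End ℤ A) (hc : IsSigmaBarPlus c) :
    ∀ i : ℕ, 1 ≤ i → ∀ s : ℕ, s ≤ i - 1 →
      ∀ u ∈ (LinearMap.range (ι ℤ : M →ₗ[ℤ] A)) ^ s, c i u = 0 := by
  obtain ⟨hHS, h0, h1, h2⟩ := hc
  -- `c n 1 = 0` for `n ≥ 1`
  have hone : ∀ n : ℕ, 1 ≤ n → c n (1 : A) = 0 := by
    intro n
    induction n using Nat.strong_induction_on with
    | _ n ih =>
      intro hn
      have key := hHS n 1 1
      rw [one_mul] at key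
      rcases n with _ | m
      · omega
      rw [Finset.sum_range_succ, Finset.sum_range_succ'] at key
      have hmid : ∀ i ∈ Finset.range m, c (i + 1) (1 : A) * c (m + 1 - (i + 1)) 1 = 0 := by
        intro i hi
        have him := Finset.mem_range.mp hi
        rw [ih (i + 1) (by omega) (by omega), zero_mul]
      rw [Finset.sum_eq_zero hmid] at key
      simp only [h0, Module.End.one_apply, Nat.sub_zero, Nat.sub_self, one_mul, mul_one,
        zero_add] at key
      exact (left_eq_add.mp key)
  -- `c n (ι m) = 0` for `n ≥ 2` and all `m : M`
  have hι : ∀ n : ℕ, 2 ≤ n → ∀ m : M, c n (ι ℤ m) = 0 := by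
    intro n hn m
    induction m using Finsupp.induction with
    | zero => simp
    | single_add a k f _ _ ih =>
      have hsingle : (Finsupp.single a k + f : M) = k • b a + f := by
        rw [b, Finsupp.smul_single', mul_one]
      rw [hsingle, map_add, map_smul, map_add, map_smul, h2 n hn a, ih]
      simp
  have main : ∀ s : ℕ, ∀ i : ℕ, s + 1 ≤ i →
      ∀ u ∈ (LinearMap.range (ι ℤ : M →ₗ[ℤ] A)) ^ s, c i u = 0 := by
    intro s
    induction s with
    | zero =>
      intro i hi u hu
      rw [pow_zero, Submodule.mem_one] at hu
      obtain ⟨z, rfl⟩ := hu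
      rw [Algebra.algebraMap_eq_smul_one, map_smul, hone i hi, smul_zero]
    | succ s ih =>
      intro i hi u hu
      rw [pow_succ'] at hu
      refine Submodule.mul_induction_on hu ?_ ?_
      · rintro x ⟨m, rfl⟩ y hy
        rw [hHS i (ι ℤ m) y]
        apply Finset.sum_eq_zero
        intro j hj
        rcases j with _ | _ | j
        · rw [Nat.sub_zero, ih i (by omega) y hy, mul_zero]
        · rw [ih (i - 1) (by omega) y hy, mul_zero]
        · rw [hι (j + 2) (by omega) m, zero_mul]
      · intro x y hx hy
        rw [map_add, hx, hy, add_zero]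
  intro i hi s hs u hu
  exact main s i (by omega) u hu
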